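/- Any set of mutually anticommuting Hermitian Pauli operators on Δ qubits (each squaring to identity, none proportional to identity) has size at most 2Δ + 1; consequently, given a fermionic encoding with disparity Δ ≥ 1, the number of simultaneously definable distinct particle species is at most 2Δ + 2. -/

import Mathlib

/-- The four single-qubit Pauli matrices I, X, Y, Z. -/
def pauliMat : Fin 4 → Matrix (Fin 2) (Fin 2) ℂ
  | 0 => 1
  | 1 => !![0, 1; 1, 0]
  | 2 => !![0, -Complex.I; Complex.I, 0]
  | 3 => !![1, 0; 0, -1]

/-- The Δ-qubit Pauli operator (tensor product of single-qubit Paulis) labelled by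
p : Fin Δ → Fin 4. -/
noncomputable def pauliOp (Δ : ℕ) (p : Fin Δ → Fin 4) :
    Matrix (Fin Δ → Fin 2) (Fin Δ → Fin 2) ℂ :=
  Matrix.of fun i j => ∏ k, pauliMat (p k) (i k) (j k)

/-! ### Auxiliary material -/

/-- Product of two Pauli labels (Fin 4 viewed as (ℤ/2)², bitwise addition). -/
def mul4 : Fin 4 → Fin 4 → Fin 4
  | 0, 0 => 0 | 0, 1 => 1 | 0, 2 => 2 | 0, 3 => 3
  | 1, 0 => 1 | 1, 1 => 0 | 1, 2 => 3 | 1, 3 => 2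
  | 2, 0 => 2 | 2, 1 => 3 | 2, 2 => 0 | 2, 3 => 1
  | 3, 0 => 3 | 3, 1 => 2 | 3, 2 => 1 | 3, 3 => 0

/-- Exponent of `I` in the phase of a product of two Pauli matrices. -/
def epow : Fin 4 → Fin 4 → ℕ
  | 1, 2 => 1 | 1, 3 => 3
  | 2, 1 => 3 | 2, 3 => 1
  | 3, 1 => 1 | 3, 2 => 3
  | _, _ => 0

/-- Phase of the product of two Pauli matrices. -/
noncomputable def ph (a b : Fin 4) : ℂ := Complex.I ^ epow a b

/-- X-part of a Pauli label. -/
def xv : Fin 4 → ZMod 2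
  | 1 => 1 | 2 => 1 | _ => 0

/-- Z-part of a Pauli label. -/
def zv : Fin 4 → ZMod 2
  | 2 => 1 | 3 => 1 | _ => 0

/-- Symplectic form on single-qubit labels: 1 iff the two Paulis anticommute. -/
def sform (a b : Fin 4) : ZMod 2 := xv a * zv b + zv a * xv b

lemma epow_eq (a b : Fin 4) : epow a b =
    if a = 1 ∧ b = 2 then 1 else if a = 1 ∧ b = 3 then 3 else if a = 2 ∧ b = 1 then 3
    else if a = 2 ∧ b = 3 then 1 else if a = 3 ∧ b = 1 then 1 else if a = 3 ∧ b = 2 then 3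
    else 0 := by
  revert a b; decide

lemma xv_eq (a : Fin 4) : xv a = if a = 1 ∨ a = 2 then 1 else 0 := by
  revert a; decide

lemma zv_eq (a : Fin 4) : zv a = if a = 2 ∨ a = 3 then 1 else 0 := by
  revert a; decide

lemma pauliMat_mul (a b : Fin 4) :
    pauliMat a * pauliMat b = ph a b • pauliMat (mul4 a b) := by
  fin_cases a <;> fin_cases b <;>
    · simp +decide only [ph, epow_eq]
      ext i j
      fin_cases i <;> fin_cases j <;>
        norm_num [ph, pauliMat, mul4, epow, Matrix.mul_apply, Fin.sum_univ_two,
          Matrix.one_apply, pow_succ, Complex.I_mul_I]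

lemma ph_swap (a b : Fin 4) : ph a b = (-1 : ℂ) ^ (sform a b).val * ph b a := by
  fin_cases a <;> fin_cases b <;>
    · simp only [ph]
      norm_num [sform, xv_eq, zv_eq, epow_eq, Fin.ext_iff, pow_succ, Complex.I_mul_I, ZMod.val_one,
        (by decide : ((1:ZMod 2)+1) = 0), ZMod.val_zero]

lemma ph_ne_zero (a b : Fin 4) : ph a b ≠ 0 := by
  simp [ph, Complex.I_ne_zero]

lemma mul4_comm (a b : Fin 4) : mul4 a b = mul4 b a := by
  fin_cases a <;> fin_cases b <;> rfl

/-- A position where each Pauli matrix has a nonzero entry. -/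
def ent : Fin 4 → Fin 2 × Fin 2
  | 0 => (0,0) | 1 => (0,1) | 2 => (0,1) | 3 => (0,0)

lemma pauliMat_entry_ne_zero (a : Fin 4) : pauliMat a (ent a).1 (ent a).2 ≠ 0 := by
  fin_cases a <;> norm_num [pauliMat, ent, Matrix.one_apply, Complex.I_ne_zero]

lemma pauliOp_mul (Δ : ℕ) (p q : Fin Δ → Fin 4) :
    pauliOp Δ p * pauliOp Δ q
      = (∏ k, ph (p k) (q k)) • pauliOp Δ (fun k => mul4 (p k) (q k)) := by
  ext i j
  have h1 : (pauliOp Δ p * pauliOp Δ q) i j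
      = ∑ f : Fin Δ → Fin 2, ∏ k, pauliMat (p k) (i k) (f k) * pauliMat (q k) (f k) (j k) := by
    simp [pauliOp, Matrix.mul_apply, Finset.prod_mul_distrib]
  rw [h1, ← Fintype.piFinset_univ,
    ← Finset.prod_univ_sum (t := fun _ : Fin Δ => (Finset.univ : Finset (Fin 2)))
      (f := fun k x => pauliMat (p k) (i k) x * pauliMat (q k) x (j k))]
  have h2 : ∀ k, ∑ x : Fin 2, pauliMat (p k) (i k) x * pauliMat (q k) x (j k)
      = ph (p k) (q k) * pauliMat (mul4 (p k) (q k)) (i k) (j k) := by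
    intro k
    rw [← Matrix.mul_apply, pauliMat_mul]
    simp
  simp only [h2]
  simp [pauliOp, Finset.prod_mul_distrib]

lemma pauliOp_entry_ne_zero (Δ : ℕ) (r : Fin Δ → Fin 4) :
    pauliOp Δ r (fun k => (ent (r k)).1) (fun k => (ent (r k)).2) ≠ 0 := by
  simp only [pauliOp, Matrix.of_apply]
  exact Finset.prod_ne_zero_iff.mpr fun k _ => pauliMat_entry_ne_zero (r k)

/-- Anticommutation of Pauli operators forces the symplectic form to be 1. -/
lemma anticomm_sform (Δ : ℕ) (p q : Fin Δ → Fin 4)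
    (h : pauliOp Δ p * pauliOp Δ q = -(pauliOp Δ q * pauliOp Δ p)) :
    ∑ k, sform (p k) (q k) = 1 := by
  rw [pauliOp_mul, pauliOp_mul] at h
  have hcomm : (fun k => mul4 (q k) (p k)) = fun k => mul4 (p k) (q k) :=
    funext fun k => mul4_comm _ _
  rw [hcomm] at h
  set r := fun k => mul4 (p k) (q k) with hr
  set i := fun k => (ent (r k)).1
  set j := fun k => (ent (r k)).2
  have hR : pauliOp Δ r i j ≠ 0 := pauliOp_entry_ne_zero Δ r
  have h' := congrArg (fun M => M i j) h
  simp only [Matrix.smul_apply, Matrix.neg_apply, smul_eq_mul] at h'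
  have hc : ∏ k, ph (p k) (q k) = -∏ k, ph (q k) (p k) := by
    have : (∏ k, ph (p k) (q k)) * pauliOp Δ r i j
        = (-∏ k, ph (q k) (p k)) * pauliOp Δ r i j := by
      rw [h']; ring
    exact mul_right_cancel₀ hR this
  have hprod : ∀ k, ph (p k) (q k)
      = (-1 : ℂ) ^ (sform (p k) (q k)).val * ph (q k) (p k) := fun k => ph_swap _ _
  rw [Finset.prod_congr rfl fun k _ => hprod k, Finset.prod_mul_distrib] at hc
  have hq : ∏ k, ph (q k) (p k) ≠ 0 :=
    Finset.prod_ne_zero_iff.mpr fun k _ => ph_ne_zero _ _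
  have hsgn : ∏ k, (-1 : ℂ) ^ (sform (p k) (q k)).val = -1 := by
    have := mul_right_cancel₀ hq (by rw [hc]; ring :
      (∏ k, (-1 : ℂ) ^ (sform (p k) (q k)).val) * ∏ k, ph (q k) (p k)
        = (-1) * ∏ k, ph (q k) (p k))
    exact this
  rw [Finset.prod_pow_eq_pow_sum] at hsgn
  have hodd : Odd (∑ k, (sform (p k) (q k)).val) := by
    by_contra he
    rw [Nat.not_odd_iff_even] at he
    rw [he.neg_one_pow] at hsgn
    norm_num at hsgn
  have hcast : ∀ a : ZMod 2, ((a.val : ℕ) : ZMod 2) = a := by decide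
  calc ∑ k, sform (p k) (q k)
      = ∑ k, (((sform (p k) (q k)).val : ℕ) : ZMod 2) := by
        exact Finset.sum_congr rfl fun k _ => (hcast _).symm
    _ = ((∑ k, (sform (p k) (q k)).val : ℕ) : ZMod 2) := by push_cast; rfl
    _ = 1 := by
        obtain ⟨t, ht⟩ := hodd
        rw [ht]; push_cast
        simp [(by decide : (2 : ZMod 2) = 0)]

/-- The vector in (ℤ/2)^(2Δ) associated to a Pauli label. -/
def vlabel {Δ : ℕ} (p : Fin Δ → Fin 4) : Fin Δ × Fin 2 → ZMod 2 :=
  fun kt => if kt.2 = 0 then xv (p kt.1) else zv (p kt.1)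

/-- The symplectic form on (ℤ/2)^(2Δ). -/
def Bform {Δ : ℕ} (u w : Fin Δ × Fin 2 → ZMod 2) : ZMod 2 :=
  ∑ k : Fin Δ, (u (k, 0) * w (k, 1) + u (k, 1) * w (k, 0))

lemma Bform_vlabel {Δ : ℕ} (p q : Fin Δ → Fin 4) :
    Bform (vlabel p) (vlabel q) = ∑ k, sform (p k) (q k) := by
  simp [Bform, vlabel, sform]

lemma Bform_sum_left {Δ : ℕ} {ι : Type*} (S : Finset ι) (v : ι → (Fin Δ × Fin 2 → ZMod 2))
    (w : Fin Δ × Fin 2 → ZMod 2) :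
    Bform (∑ i ∈ S, v i) w = ∑ i ∈ S, Bform (v i) w := by
  simp only [Bform, Finset.sum_apply, Finset.sum_mul, ← Finset.sum_add_distrib]
  rw [Finset.sum_comm]

lemma Bform_self {Δ : ℕ} (u : Fin Δ × Fin 2 → ZMod 2) : Bform u u = 0 := by
  have h : ∀ a b : ZMod 2, a * b + b * a = 0 := by decide
  simp [Bform, h]

/-- The key combinatorial bound. -/
lemma anticomm_card_bound (Δ m : ℕ) (A : Fin m → (Fin Δ → Fin 4))
    (hs : ∀ i j : Fin m, i ≠ j → ∑ k, sform (A i k) (A j k) = 1) : m ≤ 2 * Δ + 1 := by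
  by_contra hm
  push_neg at hm
  let v : Fin m → (Fin Δ × Fin 2 → ZMod 2) := fun i => vlabel (A i)
  let f : Fin (2 * Δ + 1) → Fin m := fun i => ⟨i.val, by omega⟩
  have hB : ∀ i j : Fin (2 * Δ + 1), i ≠ j → Bform (v (f i)) (v (f j)) = 1 := by
    intro i j hij
    rw [Bform_vlabel]
    exact hs _ _ (by simpa [f, Fin.ext_iff] using (Fin.val_ne_iff.mpr hij))
  have hdep : ¬ LinearIndependent (ZMod 2) (fun i => v (f i)) := by
    intro h
    have hle := h.fintype_card_le_finrank
    rw [Module.finrank_fintype_fun_eq_card] at hle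
    simp only [Fintype.card_fin, Fintype.card_prod] at hle
    omega
  rw [Fintype.not_linearIndependent_iff] at hdep
  obtain ⟨g, hg0, i₀, hi₀⟩ := hdep
  classical
  set S : Finset (Fin (2 * Δ + 1)) := Finset.univ.filter fun i => g i ≠ 0 with hS
  have hmem : i₀ ∈ S := by simp [hS, hi₀]
  have hone : ∀ a : ZMod 2, a ≠ 0 → a = 1 := by decide
  have hsum : ∑ i ∈ S, v (f i) = 0 := by
    have h' : ∑ i ∈ S, g i • v (f i) = 0 := by
      have heq : ∑ i ∈ S, g i • v (f i) = ∑ i, g i • v (f i) := by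
        rw [hS]
        exact Finset.sum_filter_of_ne fun x _ hx h0 => hx (by rw [h0, zero_smul])
      rw [heq]; exact hg0
    rw [← h']
    exact Finset.sum_congr rfl fun i hi => by
      rw [hone (g i) (by simpa [hS] using hi), one_smul]
  -- pair with an index outside the range of f
  have h1 : (S.card : ZMod 2) = 0 := by
    let jl : Fin m := ⟨2 * Δ + 1, by omega⟩
    have hBsum := congrArg (fun u => Bform u (v jl)) hsum
    rw [Bform_sum_left] at hBsum
    have hB0 : Bform (0 : Fin Δ × Fin 2 → ZMod 2) (v jl) = 0 := by simp [Bform]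
    have heach : ∀ i ∈ S, Bform (v (f i)) (v jl) = 1 := by
      intro i _
      rw [Bform_vlabel]
      refine hs _ _ ?_
      intro hcon
      have : (f i).val = jl.val := by rw [hcon]
      simp only [f, jl] at this
      omega
    rw [Finset.sum_congr rfl heach, hB0] at hBsum
    simpa using hBsum
  -- pair with an element of S
  have h2 : ((S.card - 1 : ℕ) : ZMod 2) = 0 := by
    have hBsum := congrArg (fun u => Bform u (v (f i₀))) hsum
    rw [Bform_sum_left] at hBsum
    have hB0 : Bform (0 : Fin Δ × Fin 2 → ZMod 2) (v (f i₀)) = 0 := by simp [Bform]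
    rw [hB0, ← Finset.add_sum_erase _ _ hmem, Bform_self (v (f i₀))] at hBsum
    have heach : ∀ i ∈ S.erase i₀, Bform (v (f i)) (v (f i₀)) = 1 := by
      intro i hi
      exact hB _ _ (Finset.ne_of_mem_erase hi)
    rw [Finset.sum_congr rfl heach, Finset.sum_const,
      Finset.card_erase_of_mem hmem] at hBsum
    simpa using hBsum
  rw [ZMod.natCast_eq_zero_iff] at h1 h2
  have hpos : 1 ≤ S.card := Finset.card_pos.mpr ⟨i₀, hmem⟩
  omega

/-- Any set of mutually anticommuting Hermitian Pauli operators on Δ qubits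
(each squaring to the identity, none proportional to the identity) has size at most
2Δ + 1.  Consequently, for a fermionic encoding with disparity Δ ≥ 1, the number m of
simultaneously definable distinct particle species is at most 2Δ + 2: fusing each of the
other m - 1 species with a fixed reference species yields m - 1 mutually anticommuting
Pauli operators acting only on the excess Δ-qubit space. -/
theorem species_bound (Δ : ℕ) (hΔ : 1 ≤ Δ) :
    (∀ (m : ℕ) (A : Fin m → (Fin Δ → Fin 4)),
        (∀ i, pauliOp Δ (A i) ≠ 1) →
        (Function.Injective fun i => pauliOp Δ (A i)) →
        (∀ i j, i ≠ j →
          pauliOp Δ (A i) * pauliOp Δ (A j) = -(pauliOp Δ (A j) * pauliOp Δ (A i))) →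
        m ≤ 2 * Δ + 1) ∧
    (∀ m : ℕ, 1 ≤ m →
      (∃ P : Fin (m - 1) → (Fin Δ → Fin 4),
        (∀ i, pauliOp Δ (P i) ≠ 1) ∧
        (Function.Injective fun i => pauliOp Δ (P i)) ∧
        ∀ i j, i ≠ j →
          pauliOp Δ (P i) * pauliOp Δ (P j) = -(pauliOp Δ (P j) * pauliOp Δ (P i))) →
      m ≤ 2 * Δ + 2) := by
  constructor
  · intro m A _ _ hA
    exact anticomm_card_bound Δ m A fun i j hij => anticomm_sform Δ _ _ (hA i j hij)
  · rintro m hm ⟨P, _, _, hP⟩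
    have := anticomm_card_bound Δ (m - 1) P fun i j hij => anticomm_sform Δ _ _ (hP i j hij)
    omega
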